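/- (Lemma A.1, congruence invariance of KYP inequalities). Let A ∈ ℝ^{n×n}, B ∈ ℝ^{n×m}, C ∈ ℝ^{q×n}, D ∈ ℝ^{q×m}, let T ∈ ℝ^{n×n}, R ∈ ℝ^{q×q}, S ∈ ℝ^{m×m} be invertible, let F ∈ ℝ^{m×n}, and define Ã := T⁻¹(A T + B F), B̃ := T⁻¹ B S, C̃ := R⁻¹(C T + D F), D̃ := R⁻¹ D S. Then for every symmetric X ∈ ℝ^{n×n} and symmetric M ∈ ℝ^{q×q}: KYP(X, M; A, B, C, D) is negative definite if and only if KYP(Tᵀ X T, Rᵀ M R; Ã, B̃, C̃, D̃) is negative definite. -/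

import Mathlib

open MeasureTheory Matrix

noncomputable section

namespace IQCPaper

/-- Membership in `L2e^p`: measurable and square integrable on every bounded interval. -/
def MemL2e (p : ℕ) (f : ℝ → Fin p → ℝ) : Prop :=
  Measurable f ∧ ∀ T : ℝ, 0 < T → IntegrableOn (fun t => ‖f t‖ ^ 2) (Set.Ioc 0 T) volume

/-- Membership in `L2^p`. -/
def MemL2 (p : ℕ) (f : ℝ → Fin p → ℝ) : Prop :=
  MemL2e p f ∧ IntegrableOn (fun t => ‖f t‖ ^ 2) (Set.Ioi 0) volume

/-- The `L2` norm on `[0,∞)`. -/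
def L2norm (p : ℕ) (f : ℝ → Fin p → ℝ) : ℝ :=
  Real.sqrt (∫ t in Set.Ioi (0 : ℝ), ‖f t‖ ^ 2)

/-- The filter trajectory: absolutely continuous solution of
`ξ' = A ξ + B u`, `ξ(0) = 0`, written in integral form. -/
def IsFilterTraj {k m : Type*} [Fintype k] [Fintype m]
    (A : Matrix k k ℝ) (B : Matrix k m ℝ)
    (u : ℝ → m → ℝ) (ξ : ℝ → k → ℝ) : Prop :=
  Continuous ξ ∧ ξ 0 = 0 ∧
    ∀ t : ℝ, 0 ≤ t → ξ t = ∫ s in (0 : ℝ)..t, (A.mulVec (ξ s) + B.mulVec (u s))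

/-- The KYP matrix. -/
def KYP {n m q : Type*} [Fintype n] [Fintype m] [Fintype q]
    (X : Matrix n n ℝ) (M : Matrix q q ℝ)
    (A : Matrix n n ℝ) (B : Matrix n m ℝ)
    (C : Matrix q n ℝ) (D : Matrix q m ℝ) : Matrix (n ⊕ m) (n ⊕ m) ℝ :=
  fromBlocks (Aᵀ * X + X * A + Cᵀ * M * C) (X * B + Cᵀ * M * D)
    (Bᵀ * X + Dᵀ * M * C) (Dᵀ * M * D)

/-- A real square matrix is Hurwitz if all its complex eigenvalues have negative real part. -/
def IsHurwitz {n : Type*} [Fintype n] [DecidableEq n] (A : Matrix n n ℝ) : Prop :=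
  ∀ μ ∈ spectrum ℂ (A.map Complex.ofReal), μ.re < 0

/-- Finite-horizon IQC with terminal cost matrix `Z`. -/
def FiniteHorizonIQC {k q : Type*} [Fintype k] [Fintype q] (nz nw : ℕ)
    (AΨ : Matrix k k ℝ) (BΨ : Matrix k (Fin nz ⊕ Fin nw) ℝ)
    (CΨ : Matrix q k ℝ) (DΨ : Matrix q (Fin nz ⊕ Fin nw) ℝ)
    (M : Matrix q q ℝ) (Z : Matrix k k ℝ)
    (Δ : (ℝ → Fin nz → ℝ) → (ℝ → Fin nw → ℝ)) : Prop :=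
  ∀ z : ℝ → Fin nz → ℝ, MemL2e nz z →
    ∀ ξ : ℝ → k → ℝ,
      IsFilterTraj AΨ BΨ (fun t => Sum.elim (z t) (Δ z t)) ξ →
      ∀ T : ℝ, 0 < T →
        0 ≤ (∫ t in (0 : ℝ)..T,
              (CΨ.mulVec (ξ t) + DΨ.mulVec (Sum.elim (z t) (Δ z t))) ⬝ᵥ
                M.mulVec (CΨ.mulVec (ξ t) + DΨ.mulVec (Sum.elim (z t) (Δ z t))))
            + (ξ T) ⬝ᵥ Z.mulVec (ξ T)

/-- Factorization identities for `(Z̃, M̃, C̃, D̃)`. -/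
def FactIds {k m q : Type*} [Fintype k] [Fintype m] [Fintype q]
    (AΨ : Matrix k k ℝ) (BΨ : Matrix k m ℝ) (CΨ : Matrix q k ℝ) (DΨ : Matrix q m ℝ)
    (M : Matrix q q ℝ) (Z' : Matrix k k ℝ) (M' : Matrix m m ℝ)
    (C' : Matrix m k ℝ) (D' : Matrix m m ℝ) : Prop :=
  Z'.IsSymm ∧ M'.IsSymm ∧
    AΨᵀ * Z' + Z' * AΨ + CΨᵀ * M * CΨ = C'ᵀ * M' * C' ∧
    Z' * BΨ + CΨᵀ * M * DΨ = C'ᵀ * M' * D' ∧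
    DΨᵀ * M * DΨ = D'ᵀ * M' * D'

/-- `(Z̃, M̃, C̃, D̃)` certifies a canonical factorization of `(AΨ, BΨ, CΨ, DΨ, M)`. -/
def CertifiesCanonical {k m q : Type*} [Fintype k] [Fintype m] [Fintype q]
    [DecidableEq k] [DecidableEq m]
    (AΨ : Matrix k k ℝ) (BΨ : Matrix k m ℝ) (CΨ : Matrix q k ℝ) (DΨ : Matrix q m ℝ)
    (M : Matrix q q ℝ) (Z' : Matrix k k ℝ) (M' : Matrix m m ℝ)
    (C' : Matrix m k ℝ) (D' : Matrix m m ℝ) : Prop :=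
  FactIds AΨ BΨ CΨ DΨ M Z' M' C' D' ∧ IsUnit D' ∧ IsHurwitz (AΨ - BΨ * D'⁻¹ * C')

/-- A causal operator. -/
def Causal (nz nw : ℕ) (Δ : (ℝ → Fin nz → ℝ) → (ℝ → Fin nw → ℝ)) : Prop :=
  ∀ z z' : ℝ → Fin nz → ℝ, ∀ T : ℝ, 0 < T →
    (∀ᵐ t ∂(volume.restrict (Set.Icc (0 : ℝ) T)), z t = z' t) →
    (∀ᵐ t ∂(volume.restrict (Set.Icc (0 : ℝ) T)), Δ z t = Δ z' t)

/-- A bounded operator from `L2^{nz}` to `L2^{nw}`. -/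
def BoundedOp (nz nw : ℕ) (Δ : (ℝ → Fin nz → ℝ) → (ℝ → Fin nw → ℝ)) : Prop :=
  ∃ c : ℝ, 0 ≤ c ∧ ∀ z, MemL2 nz z → MemL2 nw (Δ z) ∧ L2norm nw (Δ z) ≤ c * L2norm nz z


private lemma posdef_conj {n : Type*} [Fintype n] [DecidableEq n] {P N : Matrix n n ℝ}
    (hN : IsUnit N) (hP : P.PosDef) : (Nᵀ * P * N).PosDef := by
  rw [Matrix.posDef_iff_dotProduct_mulVec]
  constructor
  · have := Matrix.isHermitian_conjTranspose_mul_mul N hP.1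
    simpa using this
  · intro x hx
    have hx' : N.mulVec x ≠ 0 := fun h =>
      hx ((Matrix.mulVec_injective_iff_isUnit.mpr hN) (by simpa using h))
    have := hP.dotProduct_mulVec_pos hx'
    simpa [← Matrix.vecMul_vecMul, Matrix.vecMul_transpose, Matrix.dotProduct_mulVec,
      Matrix.mul_assoc] using this

private lemma posdef_conj_iff {n : Type*} [Fintype n] [DecidableEq n] {P N : Matrix n n ℝ}
    (hN : IsUnit N) : (Nᵀ * P * N).PosDef ↔ P.PosDef := by
  haveI := hN.invertible
  constructor
  · intro h
    have := posdef_conj (P := Nᵀ * P * N) (N := N⁻¹) (isUnit_nonsing_inv_iff.mpr hN) h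
    simpa [Matrix.transpose_nonsing_inv, Matrix.mul_assoc, Matrix.mul_inv_of_invertible,
      Matrix.inv_mul_cancel_left_of_invertible] using this
  · exact posdef_conj hN

/-- Lemma A.1: congruence invariance of KYP inequalities. -/
theorem kyp_congruence
    {n m q : ℕ}
    (A : Matrix (Fin n) (Fin n) ℝ) (B : Matrix (Fin n) (Fin m) ℝ)
    (C : Matrix (Fin q) (Fin n) ℝ) (D : Matrix (Fin q) (Fin m) ℝ)
    (T : Matrix (Fin n) (Fin n) ℝ) (R : Matrix (Fin q) (Fin q) ℝ)
    (S : Matrix (Fin m) (Fin m) ℝ) (F : Matrix (Fin m) (Fin n) ℝ)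
    (hT : IsUnit T) (hR : IsUnit R) (hS : IsUnit S)
    (X : Matrix (Fin n) (Fin n) ℝ) (hX : X.IsSymm)
    (M : Matrix (Fin q) (Fin q) ℝ) (hM : M.IsSymm) :
    (-(KYP X M A B C D)).PosDef ↔
      (-(KYP (Tᵀ * X * T) (Rᵀ * M * R)
          (T⁻¹ * (A * T + B * F)) (T⁻¹ * B * S)
          (R⁻¹ * (C * T + D * F)) (R⁻¹ * D * S))).PosDef := by
  haveI := hT.invertible
  haveI := hR.invertible
  haveI := hS.invertible
  set G : Matrix (Fin n ⊕ Fin m) (Fin n ⊕ Fin m) ℝ := fromBlocks T 0 F S with hGdef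
  have hG : IsUnit G := by
    rw [Matrix.isUnit_iff_isUnit_det, hGdef, Matrix.det_fromBlocks_zero₁₂]
    exact ((Matrix.isUnit_iff_isUnit_det _).mp hT).mul ((Matrix.isUnit_iff_isUnit_det _).mp hS)
  have key : KYP (Tᵀ * X * T) (Rᵀ * M * R)
      (T⁻¹ * (A * T + B * F)) (T⁻¹ * B * S)
      (R⁻¹ * (C * T + D * F)) (R⁻¹ * D * S)
      = Gᵀ * KYP X M A B C D * G := by
    simp only [KYP, hGdef, Matrix.fromBlocks_transpose, Matrix.transpose_zero,
      Matrix.fromBlocks_multiply, Matrix.zero_mul, Matrix.mul_zero, add_zero, zero_add]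
    congr 1 <;>
      · simp only [Matrix.transpose_mul, Matrix.transpose_add, Matrix.transpose_nonsing_inv,
          Matrix.mul_add, Matrix.add_mul, Matrix.mul_assoc,
          Matrix.mul_inv_cancel_left_of_invertible, Matrix.inv_mul_cancel_left_of_invertible] <;>
        abel
  have hneg : -(Gᵀ * KYP X M A B C D * G) = Gᵀ * (-(KYP X M A B C D)) * G := by
    simp [Matrix.neg_mul, Matrix.mul_neg]
  rw [key, hneg]
  exact (posdef_conj_iff hG).symm

end IQCPaper
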